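/- Let δ, η > 0, μ ∈ ℝ with μ + α/η + 1 > 0, α > 0, ξ > 0, and let f : [0,ξ] → ℝ be continuous with |f(s)| ≤ M for all s. Then the composition of the Erdélyi–Kober integral with the Riemann–Liouville integral satisfies |I_η^{μ,δ} (I^α f)(ξ)| ≤ M · ξ^α · Γ(α/η + μ + 1) / (Γ(α+1) · Γ(δ + α/η + μ + 1)). -/

import Mathlib

open MeasureTheory Set intervalIntegral

/-- Riemann–Liouville fractional integral of order `α`. -/
noncomputable def RL (α : ℝ) (f : ℝ → ℝ) (t : ℝ) : ℝ :=
  (1 / Real.Gamma α) * ∫ s in (0:ℝ)..t, (t - s) ^ (α - 1) * f s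

/-- Erdélyi–Kober fractional integral of order `δ` with parameters `η`, `μ`. -/
noncomputable def EK (η μ δ : ℝ) (y : ℝ → ℝ) (t : ℝ) : ℝ :=
  (η * t ^ (-η * (δ + μ)) / Real.Gamma δ) *
    ∫ s in (0:ℝ)..t, s ^ (η * μ + η - 1) * y s / (t ^ η - s ^ η) ^ (1 - δ)


lemma beta_integrable {a b : ℝ} (ha : 0 < a) (hb : 0 < b) :
    IntervalIntegrable (fun x : ℝ => x ^ (a-1) * (1-x) ^ (b-1)) volume 0 1 := by
  have h1 : IntervalIntegrable (fun x : ℝ => x ^ (a-1) * (1-x) ^ (b-1)) volume 0 (1/2) := by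
    apply (intervalIntegrable_rpow' (by linarith)).mul_continuousOn
    apply ContinuousOn.rpow_const (continuous_const.sub continuous_id).continuousOn
    intro x hx
    rw [uIcc_of_le (by norm_num)] at hx
    left
    show (1:ℝ) - x ≠ 0
    intro h; nlinarith [hx.2]
  have h2 : IntervalIntegrable (fun x : ℝ => x ^ (a-1) * (1-x) ^ (b-1)) volume (1/2) 1 := by
    have hi : IntervalIntegrable (fun x : ℝ => (1-x) ^ (b-1)) volume (1/2) 1 := by
      have h0 := (intervalIntegrable_rpow' (a := 1/2) (b := 0) (r := b - 1)
        (by linarith)).comp_sub_left 1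
      norm_num at h0
      exact h0
    apply hi.continuousOn_mul
    apply ContinuousOn.rpow_const continuous_id.continuousOn
    intro x hx
    rw [uIcc_of_le (by norm_num)] at hx
    left
    show x ≠ 0
    intro h; rw [h] at hx; norm_num at hx
  exact h1.trans h2

lemma real_beta {a b : ℝ} (ha : 0 < a) (hb : 0 < b) :
    ∫ x in (0:ℝ)..1, x ^ (a-1) * (1-x) ^ (b-1)
      = Real.Gamma a * Real.Gamma b / Real.Gamma (a+b) := by
  have key := Complex.Gamma_mul_Gamma_eq_betaIntegral (s := (a:ℂ)) (t := (b:ℂ))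
    (by simpa using ha) (by simpa using hb)
  have hbeta : Complex.betaIntegral (a:ℂ) (b:ℂ)
      = ((∫ x in (0:ℝ)..1, x ^ (a-1) * (1-x) ^ (b-1) : ℝ) : ℂ) := by
    rw [Complex.betaIntegral, ← intervalIntegral.integral_ofReal]
    apply intervalIntegral.integral_congr
    intro x hx
    rw [uIcc_of_le (by norm_num : (0:ℝ) ≤ 1)] at hx
    simp only []
    rw [Complex.ofReal_mul, Complex.ofReal_cpow hx.1, Complex.ofReal_cpow (by linarith [hx.2] : (0:ℝ) ≤ 1 - x)]
    push_cast
    ring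
  rw [hbeta, ← Complex.ofReal_add, Complex.Gamma_ofReal, Complex.Gamma_ofReal,
    Complex.Gamma_ofReal, ← Complex.ofReal_mul, ← Complex.ofReal_mul,
    Complex.ofReal_inj] at key
  have hpos : 0 < Real.Gamma (a + b) := Real.Gamma_pos_of_pos (by linarith)
  field_simp [key]
  rw [key]; ring

lemma subst_key {ξ η β δ : ℝ} (hξ : 0 < ξ) (hη : 0 < η) (hβ : 0 < β) (hδ : 0 < δ) :
    (∀ x ∈ Ioo (0:ℝ) 1,
      |ξ * ((1/η) * x ^ (1/η - 1))| •
        ((ξ * x ^ (1/η)) ^ (β-1) * (ξ^η - (ξ * x ^ (1/η))^η) ^ (δ-1))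
      = ξ ^ (β + η*δ - η) / η * (x ^ (β/η - 1) * (1-x) ^ (δ-1))) := by
  intro x hx
  obtain ⟨hx0, hx1⟩ := hx
  have hxle : (0:ℝ) ≤ x := hx0.le
  have h1 : (ξ * x ^ (1/η))^η = ξ^η * x := by
    rw [Real.mul_rpow hξ.le (Real.rpow_nonneg hxle _), ← Real.rpow_mul hxle,
      one_div, inv_mul_cancel₀ hη.ne', Real.rpow_one]
  have h2 : (ξ * x ^ (1/η))^(β-1) = ξ^(β-1) * x^((β-1)/η) := by
    rw [Real.mul_rpow hξ.le (Real.rpow_nonneg hxle _), ← Real.rpow_mul hxle]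
    ring_nf
  have h3 : (ξ^η - ξ^η * x)^(δ-1) = ξ^(η*(δ-1)) * (1-x)^(δ-1) := by
    rw [show ξ^η - ξ^η*x = ξ^η * (1-x) by ring,
      Real.mul_rpow (Real.rpow_nonneg hξ.le _) (by linarith), ← Real.rpow_mul hξ.le]
  rw [h1, h2, h3, smul_eq_mul,
    abs_of_pos (by positivity : (0:ℝ) < ξ * ((1/η) * x ^ (1/η - 1)))]
  rw [show x ^ (β/η - 1) = x ^ (1/η - 1) * x ^ ((β-1)/η) by
    rw [← Real.rpow_add hx0]; ring_nf]
  rw [show ξ ^ (β + η*δ - η) = ξ * (ξ^(β-1) * ξ^(η*(δ-1))) by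
    rw [show β + η*δ - η = 1 + ((β-1) + η*(δ-1)) by ring, Real.rpow_add hξ,
      Real.rpow_one, Real.rpow_add hξ]]
  ring

lemma subst_eval {ξ η β δ : ℝ} (hξ : 0 < ξ) (hη : 0 < η) (hβ : 0 < β) (hδ : 0 < δ) :
    IntegrableOn (fun s : ℝ => s ^ (β-1) * (ξ^η - s^η) ^ (δ-1)) (Ioo 0 ξ) volume ∧
    ∫ s in Ioo (0:ℝ) ξ, s ^ (β-1) * (ξ^η - s^η) ^ (δ-1)
      = ξ ^ (β + η*δ - η) / η *
          (Real.Gamma (β/η) * Real.Gamma δ / Real.Gamma (β/η + δ)) := by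
  set g : ℝ → ℝ := fun s => s ^ (β-1) * (ξ^η - s^η) ^ (δ-1) with hg
  set φ : ℝ → ℝ := fun u => ξ * u ^ (1/η) with hφ
  set φ' : ℝ → ℝ := fun u => ξ * ((1/η) * u ^ (1/η - 1)) with hφ'
  have hderiv : ∀ x ∈ Ioo (0:ℝ) 1, HasDerivWithinAt φ (φ' x) (Ioo 0 1) x := fun x hx =>
    ((Real.hasDerivAt_rpow_const (Or.inl hx.1.ne')).const_mul ξ).hasDerivWithinAt
  have hinj : InjOn φ (Ioo 0 1) := by
    intro x hx y hy h
    have h2 : x ^ (1/η) = y ^ (1/η) := mul_left_cancel₀ hξ.ne' h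
    exact Real.rpow_left_injOn (one_div_ne_zero hη.ne') hx.1.le hy.1.le h2
  have himg : φ '' (Ioo 0 1) = Ioo 0 ξ := by
    ext s
    constructor
    · rintro ⟨u, hu, rfl⟩
      refine ⟨mul_pos hξ (Real.rpow_pos_of_pos hu.1 _), ?_⟩
      have h1 : u ^ (1/η) < 1 := Real.rpow_lt_one hu.1.le hu.2 (by positivity)
      calc ξ * u ^ (1/η) < ξ * 1 := by exact mul_lt_mul_of_pos_left h1 hξ
        _ = ξ := mul_one ξ
    · intro hs
      refine ⟨(s/ξ) ^ η, ⟨Real.rpow_pos_of_pos (div_pos hs.1 hξ) _,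
        Real.rpow_lt_one (div_pos hs.1 hξ).le ((div_lt_one hξ).2 hs.2) hη⟩, ?_⟩
      show ξ * ((s/ξ) ^ η) ^ (1/η) = s
      rw [← Real.rpow_mul (div_pos hs.1 hξ).le, mul_one_div_cancel hη.ne',
        Real.rpow_one]
      field_simp
  have hkey := subst_key hξ hη hβ hδ
  have hbi : IntegrableOn
      (fun x : ℝ => ξ ^ (β + η*δ - η) / η * (x ^ (β/η - 1) * (1-x) ^ (δ-1)))
      (Ioo 0 1) volume := by
    exact (((beta_integrable (a := β/η) (b := δ) (by positivity) hδ).1.mono_set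
      Ioo_subset_Ioc_self).const_mul _)
  constructor
  · rw [← himg,
      integrableOn_image_iff_integrableOn_abs_deriv_smul measurableSet_Ioo hderiv hinj]
    exact hbi.congr_fun (fun x hx => (hkey x hx).symm) measurableSet_Ioo
  · rw [← himg, integral_image_eq_integral_abs_deriv_smul measurableSet_Ioo hderiv hinj,
      setIntegral_congr_fun measurableSet_Ioo (fun x hx => hkey x hx),
      MeasureTheory.integral_const_mul, ← integral_Ioc_eq_integral_Ioo,
      ← intervalIntegral.integral_of_le (by norm_num : (0:ℝ) ≤ 1),
      real_beta (by positivity) hδ]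


lemma RL_bound {α ξ M : ℝ} (hα : 0 < α) (hξ : 0 < ξ) {f : ℝ → ℝ}
    (hM : ∀ s ∈ Icc (0:ℝ) ξ, |f s| ≤ M)
    {t : ℝ} (ht : t ∈ Ioc (0:ℝ) ξ) : |RL α f t| ≤ M * t ^ α / Real.Gamma (α+1) := by
  have hM0 : 0 ≤ M := (abs_nonneg _).trans (hM 0 ⟨le_refl _, hξ.le⟩)
  have hΓ : 0 < Real.Gamma α := Real.Gamma_pos_of_pos hα
  have hb : ‖∫ s in (0:ℝ)..t, (t-s)^(α-1) * f s‖
      ≤ |∫ s in (0:ℝ)..t, (t-s)^(α-1) * M| := by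
    apply intervalIntegral.norm_integral_le_abs_of_norm_le
    · rw [uIoc_of_le ht.1.le]
      filter_upwards [ae_restrict_mem measurableSet_Ioc] with s hs
      have hsI : s ∈ Icc (0:ℝ) ξ := ⟨hs.1.le, hs.2.trans ht.2⟩
      have hts : (0:ℝ) ≤ t - s := by linarith [hs.2]
      rw [norm_mul, Real.norm_rpow_of_nonneg hts, Real.norm_eq_abs,
        abs_of_nonneg hts]
      exact mul_le_mul_of_nonneg_left ((Real.norm_eq_abs _) ▸ hM s hsI)
        (Real.rpow_nonneg hts _)
    · simpa using ((intervalIntegrable_rpow' (a := t) (b := 0)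
        (by linarith : (-1:ℝ) < α - 1)).comp_sub_left t).mul_const M
  have heval : ∫ s in (0:ℝ)..t, (t-s)^(α-1) * M = t ^ α / α * M := by
    rw [intervalIntegral.integral_mul_const]
    congr 1
    have := intervalIntegral.integral_comp_sub_left (a := (0:ℝ)) (b := t)
      (fun x => x ^ (α-1)) t
    rw [this, sub_self, sub_zero, integral_rpow (Or.inl (by linarith)),
      sub_add_cancel, Real.zero_rpow hα.ne', sub_zero]
  rw [RL, abs_mul, abs_of_nonneg (by positivity : (0:ℝ) ≤ 1 / Real.Gamma α)]
  have : |∫ s in (0:ℝ)..t, (t-s)^(α-1) * M| = t ^ α / α * M := by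
    rw [heval]; exact abs_of_nonneg (mul_nonneg (div_nonneg
      (Real.rpow_nonneg ht.1.le α) hα.le) hM0)
  rw [Real.Gamma_add_one hα.ne']
  calc 1 / Real.Gamma α * |∫ s in (0:ℝ)..t, (t - s) ^ (α - 1) * f s|
      ≤ 1 / Real.Gamma α * (t ^ α / α * M) := by
        rw [← this]; exact mul_le_mul_of_nonneg_left hb (by positivity)
    _ = M * t ^ α / (α * Real.Gamma α) := by field_simp

lemma aux_alg (η X M Y Γ1 Γ2 Γa Γd : ℝ) (h1 : η ≠ 0) (h2 : Γd ≠ 0) (h3 : Γa ≠ 0)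
    (h4 : Γ2 ≠ 0) :
    η * X / Γd * (M/Γa * (Y/η * (Γ1 * Γd / Γ2))) = M * (X*Y) * Γ1/(Γa * Γ2) := by
  field_simp

theorem erdelyi_kober_comp_riemann_liouville_bound
    (δ η μ α ξ M : ℝ) (hδ : 0 < δ) (hη : 0 < η) (hμ : 0 < μ + α / η + 1)
    (hα : 0 < α) (hξ : 0 < ξ) (f : ℝ → ℝ) (hf : ContinuousOn f (Set.Icc 0 ξ))
    (hM : ∀ s ∈ Set.Icc (0:ℝ) ξ, |f s| ≤ M) :
    |EK η μ δ (RL α f) ξ| ≤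
      M * ξ ^ α * Real.Gamma (α / η + μ + 1) /
        (Real.Gamma (α + 1) * Real.Gamma (δ + α / η + μ + 1)) := by
  have hM0 : 0 ≤ M := (abs_nonneg _).trans (hM 0 ⟨le_refl _, hξ.le⟩)
  set β := η*μ + η + α with hβdef
  have hβ : 0 < β := by
    have hb2 : β = η * (μ + α/η + 1) := by rw [hβdef]; field_simp; ring
    rw [hb2]; exact mul_pos hη hμ
  obtain ⟨hInt, hEval⟩ := subst_eval hξ hη hβ hδ
  have hΓδ : 0 < Real.Gamma δ := Real.Gamma_pos_of_pos hδ
  have hΓα : 0 < Real.Gamma (α+1) := Real.Gamma_pos_of_pos (by linarith)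
  have hC0 : 0 < η * ξ ^ (-η * (δ + μ)) / Real.Gamma δ := by positivity
  set G : ℝ → ℝ :=
    fun s => M / Real.Gamma (α+1) * (s ^ (β-1) * (ξ^η - s^η) ^ (δ-1)) with hG
  have hGint : IntervalIntegrable G volume 0 ξ := by
    rw [intervalIntegrable_iff, uIoc_of_le hξ.le]
    exact ((integrableOn_Ioc_iff_integrableOn_Ioo enorm_ne_top).2 hInt).const_mul _
  have hres : volume.restrict (Set.uIoc (0:ℝ) ξ) = volume.restrict (Ioo 0 ξ) := by
    rw [uIoc_of_le hξ.le, Measure.restrict_congr_set Ioo_ae_eq_Ioc.symm]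
  have hbound : ‖∫ s in (0:ℝ)..ξ, s ^ (η*μ+η-1) * RL α f s / (ξ^η - s^η) ^ (1-δ)‖
      ≤ |∫ s in (0:ℝ)..ξ, G s| := by
    apply intervalIntegral.norm_integral_le_abs_of_norm_le _ hGint
    rw [hres]
    filter_upwards [ae_restrict_mem measurableSet_Ioo] with s hs
    have hs0 : 0 < s := hs.1
    have hsξ : s < ξ := hs.2
    have hpow : s ^ η < ξ ^ η := Real.rpow_lt_rpow hs0.le hsξ hη
    have hd : (0:ℝ) < ξ^η - s^η := by linarith
    have hD : (0:ℝ) < (ξ^η - s^η) ^ (1-δ) := Real.rpow_pos_of_pos hd _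
    have hRL := RL_bound hα hξ hM ⟨hs0, hsξ.le⟩
    have hA : (0:ℝ) ≤ s ^ (η*μ+η-1) := Real.rpow_nonneg hs0.le _
    have h2 : s^(η*μ+η-1) * s^α = s^(β-1) := by
      rw [← Real.rpow_add hs0]; congr 1; rw [hβdef]; ring
    have key : s^(η*μ+η-1) * (M * s^α / Real.Gamma (α+1)) / (ξ^η-s^η)^(1-δ)
        = G s := by
      calc s^(η*μ+η-1) * (M * s^α / Real.Gamma (α+1)) / (ξ^η-s^η)^(1-δ)
          = M / Real.Gamma (α+1) *
              ((s^(η*μ+η-1) * s^α) * ((ξ^η-s^η)^(1-δ))⁻¹) := by ring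
        _ = G s := by rw [h2, ← Real.rpow_neg hd.le, neg_sub, hG]
    rw [Real.norm_eq_abs, abs_div, abs_mul, abs_of_nonneg hA, abs_of_pos hD]
    calc s ^ (η*μ+η-1) * |RL α f s| / (ξ^η - s^η) ^ (1-δ)
        ≤ s^(η*μ+η-1) * (M * s^α / Real.Gamma (α+1)) / (ξ^η-s^η)^(1-δ) := by
          gcongr
        _ = G s := key
  have hGnon : (0:ℝ) ≤ ∫ s in (0:ℝ)..ξ, G s := by
    apply intervalIntegral.integral_nonneg hξ.le
    intro s hs
    have h1 : (0:ℝ) ≤ s := hs.1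
    have h2 : s^η ≤ ξ^η := Real.rpow_le_rpow h1 hs.2 hη.le
    exact mul_nonneg (div_nonneg hM0 hΓα.le) (mul_nonneg (Real.rpow_nonneg h1 _)
      (Real.rpow_nonneg (by linarith) _))
  have hGeval : ∫ s in (0:ℝ)..ξ, G s
      = M / Real.Gamma (α+1) * (ξ^(β+η*δ-η)/η *
          (Real.Gamma (β/η) * Real.Gamma δ / Real.Gamma (β/η + δ))) := by
    rw [hG, intervalIntegral.integral_const_mul,
      intervalIntegral.integral_of_le hξ.le, integral_Ioc_eq_integral_Ioo, hEval]
  have hβη : β/η = α/η + μ + 1 := by rw [hβdef]; field_simp; ring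
  have hexp : ξ^(-η*(δ+μ)) * ξ^(β+η*δ-η) = ξ^α := by
    rw [← Real.rpow_add hξ]; congr 1; rw [hβdef]; ring
  have hμ' : 0 < α/η + μ + 1 := by linarith
  have hΓ1 : 0 < Real.Gamma (α/η + μ + 1) := Real.Gamma_pos_of_pos hμ'
  have hΓ2 : 0 < Real.Gamma (α/η + μ + 1 + δ) := Real.Gamma_pos_of_pos (by linarith)
  rw [EK, abs_mul, abs_of_pos hC0]
  calc η * ξ ^ (-η * (δ + μ)) / Real.Gamma δ *
        |∫ s in (0:ℝ)..ξ, s ^ (η*μ+η-1) * RL α f s / (ξ^η - s^η) ^ (1-δ)|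
      ≤ η * ξ ^ (-η * (δ + μ)) / Real.Gamma δ * (∫ s in (0:ℝ)..ξ, G s) := by
        refine mul_le_mul_of_nonneg_left ?_ hC0.le
        rw [← abs_of_nonneg hGnon]
        exact hbound
    _ = M * ξ ^ α * Real.Gamma (α / η + μ + 1) /
        (Real.Gamma (α + 1) * Real.Gamma (δ + α / η + μ + 1)) := by
        rw [hGeval, hβη, show δ + α/η + μ + 1 = α/η + μ + 1 + δ by ring, ← hexp]
        exact aux_alg η _ M _ _ _ _ _ hη.ne' hΓδ.ne' hΓα.ne' hΓ2.ne'
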